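/- Let G be a finite bipartite graph with vertex bipartition V = A ∪ B satisfying |A| = |B|. Then G fails to have a perfect matching if and only if there exists a subset U ⊆ V such that the subgraph of G induced on U is connected, |U ∩ A| > |U ∩ B|, and every vertex of U that is adjacent in G to some vertex of V ∖ U belongs to B. -/

import Mathlib

open SimpleGraph Finset

private lemma walk_induce_reach {V : Type} (G : SimpleGraph V) {W U : Set V} {a b : ↥W}
    (p : (G.induce W).Walk a b) (hsupp : ∀ z ∈ p.support, (z : V) ∈ U) :
    (G.induce U).Reachable ⟨a, hsupp a p.start_mem_support⟩ ⟨b, hsupp b p.end_mem_support⟩ := by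
  induction p with
  | nil => exact Reachable.refl _
  | @cons a c b h q ih =>
      have ha : (a : V) ∈ U := hsupp a (by simp)
      have hc : (c : V) ∈ U := hsupp c (by simp)
      have hadj : (G.induce U).Adj ⟨a, ha⟩ ⟨c, hc⟩ := by
        simpa using (by simpa using h : G.Adj a c)
      exact hadj.reachable.trans (ih fun z hz => hsupp z (by simp [hz]))

private lemma matching_of_fun {V : Type} [Fintype V] [DecidableEq V] (G : SimpleGraph V)
    (A B : Finset V) (hdisj : Disjoint A B) (hunion : A ∪ B = Finset.univ)
    (hcard : A.card = B.card)
    (f : ↥A → V) (hfinj : Function.Injective f)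
    (hfB : ∀ a : ↥A, f a ∈ B) (hfadj : ∀ a : ↥A, G.Adj ↑a (f a)) :
    ∃ M : SimpleGraph.Subgraph G, M.IsPerfectMatching := by
  classical
  have hsurj : ∀ b ∈ B, ∃ a : ↥A, f a = b := by
    intro b hb
    have hbij : Function.Bijective (fun a : ↥A => (⟨f a, hfB a⟩ : ↥B)) := by
      rw [Fintype.bijective_iff_injective_and_card]
      refine ⟨fun x y hxy => hfinj (by simpa using congrArg Subtype.val hxy), by
        simp [Fintype.card_coe, hcard]⟩
    obtain ⟨a, ha⟩ := hbij.2 ⟨b, hb⟩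
    exact ⟨a, by simpa using congrArg Subtype.val ha⟩
  have hAB : ∀ {x : V}, x ∈ A → x ∈ B → False := fun hx hy =>
    (Finset.disjoint_left.mp hdisj) hx hy
  refine ⟨{ verts := Set.univ
            Adj := fun u v => (∃ a : ↥A, u = ↑a ∧ v = f a) ∨ (∃ a : ↥A, v = ↑a ∧ u = f a)
            adj_sub := by
              rintro u v (⟨a, rfl, rfl⟩ | ⟨a, rfl, rfl⟩)
              · exact hfadj a
              · exact (hfadj a).symm
            edge_vert := fun _ => trivial
            symm := ⟨fun u v h => h.symm.imp (fun ⟨a,h1,h2⟩ => ⟨a,h1,h2⟩) (fun ⟨a,h1,h2⟩ => ⟨a,h1,h2⟩)⟩ }, ?_, fun v => trivial⟩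
  intro v _
  by_cases hv : v ∈ A
  · refine ⟨f ⟨v, hv⟩, Or.inl ⟨⟨v, hv⟩, rfl, rfl⟩, ?_⟩
    rintro w (⟨a, hva, rfl⟩ | ⟨a, rfl, hva⟩)
    · have : a = ⟨v, hv⟩ := Subtype.ext hva.symm
      rw [this]
    · exact absurd (hva ▸ hfB a) (fun hb => hAB hv hb)
  · have hvB : v ∈ B := by
      have : v ∈ A ∪ B := hunion ▸ Finset.mem_univ v
      simpa [hv] using Finset.mem_union.mp this
    obtain ⟨a, ha⟩ := hsurj v hvB
    refine ⟨↑a, Or.inr ⟨a, rfl, ha.symm⟩, ?_⟩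
    rintro w (⟨a', hva', rfl⟩ | ⟨a', rfl, hva'⟩)
    · exact absurd (hva' ▸ a'.2) hv
    · have : a' = a := hfinj (by rw [ha, ← hva'])
      rw [this]

private lemma exists_bad_U {V : Type} [Fintype V] [DecidableEq V] (G : SimpleGraph V)
    (A B : Finset V) (hdisj : Disjoint A B) (hunion : A ∪ B = Finset.univ)
    (hbip : ∀ u v : V, G.Adj u v → (u ∈ A ∧ v ∈ B) ∨ (u ∈ B ∧ v ∈ A))
    (hcard : A.card = B.card)
    (hAB : ∀ {x : V}, x ∈ A → x ∈ B → False)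
    (s : Finset ↥A) (t : ↥A → Finset V)
    (htdef : ∀ (a : ↥A) (b : V), b ∈ t a ↔ b ∈ B ∧ G.Adj ↑a b)
    (hs : (s.biUnion t).card < s.card) :
      ∃ U : Finset V,
        (SimpleGraph.induce (↑U : Set V) G).Connected ∧
        (U ∩ B).card < (U ∩ A).card ∧
        ∀ u ∈ U, (∃ v : V, v ∉ U ∧ G.Adj u v) → u ∈ B := by
  classical
  set S : Finset V := s.image Subtype.val with hSdef
  set N : Finset V := s.biUnion t with hNdef
  have hScard : S.card = s.card := Finset.card_image_of_injective _ Subtype.val_injective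
  have hSA : S ⊆ A := by
    intro x hx
    obtain ⟨a, _, rfl⟩ := Finset.mem_image.mp hx
    exact a.2
  have hNB : N ⊆ B := by
    intro x hx
    obtain ⟨a, _, hxa⟩ := Finset.mem_biUnion.mp hx
    exact ((htdef a x).mp hxa).1
  set W : Finset V := S ∪ N with hWdef
  have hnbr : ∀ u ∈ S, ∀ v, G.Adj u v → v ∈ N := by
    intro u hu v hadj
    obtain ⟨a, haS, rfl⟩ := Finset.mem_image.mp hu
    have hvB : v ∈ B := by
      rcases hbip _ _ hadj with ⟨_, h⟩ | ⟨h, _⟩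
      · exact h
      · exact absurd h (fun h => hAB a.2 h)
    exact Finset.mem_biUnion.mpr ⟨a, haS, (htdef a v).mpr ⟨hvB, hadj⟩⟩
  have hWA : W ∩ A = S := by
    rw [hWdef, Finset.union_inter_distrib_right]
    rw [Finset.inter_eq_left.mpr hSA]
    have : N ∩ A = ∅ := by
      apply Finset.eq_empty_of_forall_notMem
      intro x hx
      obtain ⟨h1, h2⟩ := Finset.mem_inter.mp hx
      exact hAB h2 (hNB h1)
    rw [this, Finset.union_empty]
  have hWB : W ∩ B = N := by
    rw [hWdef, Finset.union_inter_distrib_right]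
    rw [Finset.inter_eq_left.mpr hNB]
    have : S ∩ B = ∅ := by
      apply Finset.eq_empty_of_forall_notMem
      intro x hx
      obtain ⟨h1, h2⟩ := Finset.mem_inter.mp hx
      exact hAB (hSA h1) h2
    rw [this, Finset.empty_union]
  have hltW : (W ∩ B).card < (W ∩ A).card := by
    rw [hWA, hWB, hScard]; exact hs
  set H : SimpleGraph ↥(↑W : Set V) := G.induce ↑W with hHdef
  haveI : Fintype H.ConnectedComponent := Fintype.ofFinite _
  set F : H.ConnectedComponent → Finset V :=
    fun c => W.filter (fun v => ∃ h : v ∈ (↑W : Set V), H.connectedComponentMk ⟨v, h⟩ = c)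
    with hFdef
  have hmemF : ∀ (v : V) (hv : v ∈ (↑W : Set V)) (c : H.ConnectedComponent),
      v ∈ F c ↔ H.connectedComponentMk ⟨v, hv⟩ = c := by
    intro v hv c
    constructor
    · intro h
      obtain ⟨-, h', hc⟩ := Finset.mem_filter.mp h
      exact hc
    · intro h
      exact Finset.mem_filter.mpr ⟨hv, hv, h⟩
  have hsum : ∀ X : Finset V, (W ∩ X).card = ∑ c, (F c ∩ X).card := by
    intro X
    have hW : W ∩ X = Finset.univ.biUnion (fun c => F c ∩ X) := by
      ext v
      simp only [Finset.mem_biUnion, Finset.mem_univ, true_and, Finset.mem_inter]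
      constructor
      · rintro ⟨hvW, hvX⟩
        exact ⟨H.connectedComponentMk ⟨v, hvW⟩, (hmemF v hvW _).mpr rfl, hvX⟩
      · rintro ⟨c, hvF, hvX⟩
        exact ⟨Finset.filter_subset _ _ hvF, hvX⟩
    rw [hW]
    apply Finset.card_biUnion
    intro c _ c' _ hcc
    apply Finset.disjoint_left.mpr
    intro v hv hv'
    have hvW : v ∈ (↑W : Set V) := Finset.filter_subset _ _ (Finset.mem_inter.mp hv).1
    exact hcc (((hmemF v hvW c).mp (Finset.mem_inter.mp hv).1).symm.trans
      ((hmemF v hvW c').mp (Finset.mem_inter.mp hv').1))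
  have hex : ∃ c : H.ConnectedComponent, (F c ∩ B).card < (F c ∩ A).card := by
    by_contra hc
    push_neg at hc
    have : (W ∩ A).card ≤ (W ∩ B).card := by
      rw [hsum A, hsum B]
      exact Finset.sum_le_sum (fun c _ => hc c)
    omega
  obtain ⟨c, hcard_c⟩ := hex
  refine ⟨F c, ?_, hcard_c, ?_⟩
  · have hne : (F c ∩ A).Nonempty := Finset.card_pos.mp (lt_of_le_of_lt (Nat.zero_le _) hcard_c)
    obtain ⟨x0, hx0⟩ := hne
    have hx0F : x0 ∈ F c := (Finset.mem_inter.mp hx0).1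
    have hpre : (SimpleGraph.induce (↑(F c) : Set V) G).Preconnected := by
      rintro ⟨x, hx⟩ ⟨y, hy⟩
      have hxF : x ∈ F c := hx
      have hyF : y ∈ F c := hy
      have hxW : x ∈ W := Finset.filter_subset _ _ hxF
      have hyW : y ∈ W := Finset.filter_subset _ _ hyF
      have hcx : H.connectedComponentMk ⟨x, hxW⟩ = c := (hmemF x hxW c).mp hxF
      have hcy : H.connectedComponentMk ⟨y, hyW⟩ = c := (hmemF y hyW c).mp hyF
      have hreach : H.Reachable ⟨x, hxW⟩ ⟨y, hyW⟩ :=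
        ConnectedComponent.eq.mp (hcx.trans hcy.symm)
      obtain ⟨p⟩ := hreach
      have hsupp : ∀ z ∈ p.support, (z : V) ∈ (↑(F c) : Set V) := by
        intro z hz
        have hrz : H.Reachable ⟨x, hxW⟩ z := ⟨p.takeUntil z hz⟩
        have hcz : H.connectedComponentMk z = c := by
          rw [← ConnectedComponent.sound hrz]
          exact hcx
        show (z : V) ∈ F c
        rw [hmemF (z : V) z.2 c]
        exact hcz
      exact walk_induce_reach G p hsupp
    haveI : Nonempty (↑(F c) : Set V) := ⟨⟨x0, hx0F⟩⟩
    exact ⟨hpre⟩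
  · intro u huF ⟨v, hvF, hadj⟩
    by_contra huB
    have huW : u ∈ W := Finset.filter_subset _ _ huF
    have huA : u ∈ A := by
      have : u ∈ A ∪ B := hunion ▸ Finset.mem_univ u
      rcases Finset.mem_union.mp this with h | h
      · exact h
      · exact absurd h huB
    have huS : u ∈ S := hWA ▸ Finset.mem_inter.mpr ⟨huW, huA⟩
    have hvN : v ∈ N := hnbr u huS v hadj
    have hvW : v ∈ W := Finset.mem_union_right _ hvN
    have hadjH : H.Adj ⟨u, huW⟩ ⟨v, hvW⟩ := by rw [hHdef]; simpa using hadj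
    apply hvF
    rw [hmemF v hvW c]
    rw [ConnectedComponent.sound hadjH.symm.reachable]
    exact (hmemF u huW c).mp huF


theorem statement0 {V : Type} [Fintype V] [DecidableEq V] (G : SimpleGraph V)
    (A B : Finset V) (hdisj : Disjoint A B) (hunion : A ∪ B = Finset.univ)
    (hbip : ∀ u v : V, G.Adj u v → (u ∈ A ∧ v ∈ B) ∨ (u ∈ B ∧ v ∈ A))
    (hcard : A.card = B.card) :
    (¬ ∃ M : SimpleGraph.Subgraph G, M.IsPerfectMatching) ↔
      ∃ U : Finset V,
        (SimpleGraph.induce (↑U : Set V) G).Connected ∧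
        (U ∩ B).card < (U ∩ A).card ∧
        ∀ u ∈ U, (∃ v : V, v ∉ U ∧ G.Adj u v) → u ∈ B := by
  classical
  have hAB : ∀ {x : V}, x ∈ A → x ∈ B → False := fun hx hy =>
    (Finset.disjoint_left.mp hdisj) hx hy
  constructor
  · intro hno
    set t : ↥A → Finset V := fun a => B.filter (fun b => G.Adj ↑a b) with htd
    have ht : ∀ (a : ↥A) (b : V), b ∈ t a ↔ b ∈ B ∧ G.Adj ↑a b := by
      intro a b
      rw [htd]
      exact Finset.mem_filter
    have hall : ¬ ∀ s : Finset ↥A, s.card ≤ (s.biUnion t).card := by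
      intro hh
      obtain ⟨f, hfinj, hft⟩ := (Finset.all_card_le_biUnion_card_iff_exists_injective t).mp hh
      exact hno (matching_of_fun G A B hdisj hunion hcard f hfinj
        (fun a => ((ht a (f a)).mp (hft a)).1) (fun a => ((ht a (f a)).mp (hft a)).2))
    push_neg at hall
    obtain ⟨s, hs⟩ := hall
    exact exists_bad_U G A B hdisj hunion hbip hcard hAB s t ht hs
  · rintro ⟨U, hconn, hlt, hbd⟩ ⟨M, hMm, hMs⟩
    have key : (U ∩ A).card ≤ (U ∩ B).card := by
      have hpart : ∀ v : V, ∃! w, M.Adj v w := fun v => hMm (hMs v)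
      set p : V → V := fun v => (hpart v).choose with hp
      have hpadj : ∀ v, M.Adj v (p v) := fun v => (hpart v).choose_spec.1
      have hpuniq : ∀ v w, M.Adj v w → w = p v := fun v w h =>
        ((hpart v).choose_spec.2 w h)
      apply Finset.card_le_card_of_injOn p
      · intro a ha
        obtain ⟨haU, haA⟩ := Finset.mem_inter.mp ha
        have hadj : G.Adj a (p a) := M.adj_sub (hpadj a)
        have hpB : p a ∈ B := by
          rcases hbip _ _ hadj with ⟨_, h⟩ | ⟨h, _⟩
          · exact h
          · exact absurd h (fun h => hAB haA h)
        have hpU : p a ∈ U := by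
          by_contra hne
          exact hAB haA (hbd a haU ⟨p a, hne, hadj⟩)
        exact Finset.mem_inter.mpr ⟨hpU, hpB⟩
      · intro a ha a' ha' hpe
        have h1 : M.Adj (p a) a := (hpadj a).symm
        have h2 : M.Adj (p a) a' := hpe ▸ (hpadj a').symm
        rw [hpuniq _ _ h1, hpuniq _ _ h2]
    omega
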